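/- arXiv:2111.11708 — 2 statements merged into one kernel-verified Lean document; each statement's English description precedes it below -/
import Mathlib

section
/- Let γ > 1 and let ρ : ℝⁿ → ℝ≥0 be a continuous function with ρ^{γ-1} differentiable on the open set Ω = {ρ > 0}, with ∇(ρ^{γ-1})(x) → 0 as x in Ω approaches any point x̌ of ∂Ω. Fix x̌ ∈ ∂Ω and a unit vector v, and suppose that for every δ₀ > 0 there exist h₁, h₂ ∈ (0, δ₀) with x̌ + h₁v ∈ Ω and x̌ + h₂v ∉ Ω. Then lim_{h→0+} ρ^{γ-1}(x̌ + hv)/h = 0. -/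
open Set Filter Topology

/-- If `ρ ≥ 0` is continuous with open support `Ω = {ρ > 0}`, `ρ^(γ-1)` is differentiable
on `Ω` with gradient tending to `0` at every boundary point, and the ray `xb + h v`
(for `h → 0+`) oscillates between `Ω` and its complement, then
`ρ^(γ-1)(xb + h v)/h → 0` as `h → 0+`. -/
theorem power_density_over_h_tendsto_zero
    {n : ℕ} (γ : ℝ) (hγ : 1 < γ)
    (ρ : EuclideanSpace ℝ (Fin n) → ℝ)
    (hρc : Continuous ρ) (hρnn : ∀ x, 0 ≤ ρ x)
    (Ω : Set (EuclideanSpace ℝ (Fin n))) (hΩ : Ω = {x | 0 < ρ x})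
    (f : EuclideanSpace ℝ (Fin n) → ℝ) (hf : ∀ x, f x = ρ x ^ (γ - 1))
    (hdiff : DifferentiableOn ℝ f Ω)
    (hgrad : ∀ z ∈ frontier Ω, Tendsto (fun x => fderiv ℝ f x) (𝓝[Ω] z) (𝓝 0))
    (xb : EuclideanSpace ℝ (Fin n)) (hxb : xb ∈ frontier Ω)
    (v : EuclideanSpace ℝ (Fin n)) (hv : ‖v‖ = 1)
    (hosc : ∀ δ₀ > (0:ℝ), ∃ h₁ ∈ Ioo (0:ℝ) δ₀, ∃ h₂ ∈ Ioo (0:ℝ) δ₀,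
      xb + h₁ • v ∈ Ω ∧ xb + h₂ • v ∉ Ω) :
    Tendsto (fun h : ℝ => f (xb + h • v) / h) (𝓝[>] (0:ℝ)) (𝓝 0) := by
  have hγ1 : 0 < γ - 1 := by linarith
  have hΩopen : IsOpen Ω := by
    rw [hΩ]; exact isOpen_lt continuous_const hρc
  have hfc : Continuous f := by
    have h1 : Continuous fun x => ρ x ^ (γ - 1) :=
      hρc.rpow_const (fun x => Or.inr hγ1.le)
    have : f = fun x => ρ x ^ (γ - 1) := funext hf
    rw [this]; exact h1
  have hf0 : ∀ x, x ∉ Ω → f x = 0 := by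
    intro x hx
    have hρ0 : ρ x = 0 := le_antisymm (by simpa [hΩ, not_lt] using hx) (hρnn x)
    rw [hf, hρ0, Real.zero_rpow hγ1.ne']
  rw [NormedAddCommGroup.tendsto_nhds_zero]
  intro ε hε
  obtain ⟨δ, hδ, hδball⟩ := (Metric.tendsto_nhdsWithin_nhds.1 (hgrad xb hxb)) (ε/2) (by linarith)
  have key : ∀ h ∈ Ioo (0:ℝ) δ, ‖f (xb + h • v)‖ ≤ ε/2 * h := by
    intro h hh
    by_cases hmem : xb + h • v ∈ Ω
    · obtain ⟨h₂, hh₂, hnot⟩ : ∃ h₂ ∈ Ioo (0:ℝ) h, xb + h₂ • v ∉ Ω := by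
        obtain ⟨h₁, hh₁, h₂, hh₂', _, hno⟩ := hosc h hh.1
        exact ⟨h₂, hh₂', hno⟩
      set K := Icc (0:ℝ) h ∩ (fun t => xb + t • v) ⁻¹' Ωᶜ with hK
      have hKc : IsCompact K :=
        isCompact_Icc.inter_right (hΩopen.isClosed_compl.preimage (by continuity))
      have hKne : K.Nonempty := ⟨h₂, ⟨hh₂.1.le, hh₂.2.le⟩, hnot⟩
      set t₀ := sSup K with ht₀def
      have ht₀K : t₀ ∈ K := hKc.sSup_mem hKne
      have ht₀not : xb + t₀ • v ∉ Ω := ht₀K.2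
      have ht₀0 : 0 ≤ t₀ := ht₀K.1.1
      have ht₀h : t₀ < h := lt_of_le_of_ne ht₀K.1.2 (fun he => ht₀not (by rw [he]; exact hmem))
      have hmemIoc : ∀ t ∈ Ioc t₀ h, xb + t • v ∈ Ω := by
        intro t ht
        by_contra hc
        have htK : t ∈ K := ⟨⟨ht₀0.trans ht.1.le, ht.2⟩, hc⟩
        exact absurd (le_csSup hKc.bddAbove htK) (not_le.2 ht.1)
      have hderiv : ∀ t ∈ Ioc t₀ h,
          HasDerivAt (fun s => f (xb + s • v)) ((fderiv ℝ f (xb + t • v)) v) t ∧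
            ‖(fderiv ℝ f (xb + t • v)) v‖ ≤ ε/2 := by
        intro t ht
        have hyΩ := hmemIoc t ht
        have hline : HasDerivAt (fun s : ℝ => xb + s • v) v t := by
          simpa using ((hasDerivAt_id t).smul_const v).const_add xb
        have hfd : HasFDerivAt f (fderiv ℝ f (xb + t • v)) (xb + t • v) :=
          (hdiff.differentiableAt (hΩopen.mem_nhds hyΩ)).hasFDerivAt
        refine ⟨hfd.comp_hasDerivAt t hline, ?_⟩
        have hdist : dist (xb + t • v) xb < δ := by
          rw [dist_eq_norm, add_sub_cancel_left, norm_smul, Real.norm_eq_abs, hv, mul_one,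
            abs_of_pos (ht₀0.trans_lt ht.1)]
          exact lt_of_le_of_lt ht.2 hh.2
        have hnorm : ‖fderiv ℝ f (xb + t • v)‖ < ε/2 := by
          simpa [dist_zero_right] using hδball hyΩ hdist
        calc ‖(fderiv ℝ f (xb + t • v)) v‖
            ≤ ‖fderiv ℝ f (xb + t • v)‖ * ‖v‖ := (fderiv ℝ f _).le_opNorm v
          _ = ‖fderiv ℝ f (xb + t • v)‖ := by rw [hv, mul_one]
          _ ≤ ε/2 := hnorm.le
      have hglim : Tendsto (fun s => ‖f (xb + h • v) - f (xb + s • v)‖) (𝓝[>] t₀)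
          (𝓝 ‖f (xb + h • v) - f (xb + t₀ • v)‖) := by
        have hc : Continuous fun s : ℝ => ‖f (xb + h • v) - f (xb + s • v)‖ := by
          apply Continuous.norm
          exact continuous_const.sub (hfc.comp (continuous_const.add (continuous_id.smul continuous_const)))
        exact (hc.tendsto t₀).mono_left nhdsWithin_le_nhds
      have hbd : ∀ᶠ s in 𝓝[>] t₀, ‖f (xb + h • v) - f (xb + s • v)‖ ≤ ε/2 * h := by
        filter_upwards [Ioo_mem_nhdsGT_of_mem ⟨le_refl t₀, ht₀h⟩] with s hs
        have hmvt := norm_image_sub_le_of_norm_deriv_le_segment'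
          (f := fun s => f (xb + s • v)) (f' := fun t => (fderiv ℝ f (xb + t • v)) v) (C := ε/2)
          (fun t ht => ((hderiv t ⟨hs.1.trans_le ht.1, ht.2⟩).1).hasDerivWithinAt)
          (fun t ht => (hderiv t ⟨hs.1.trans_le ht.1, ht.2.le⟩).2)
          h ⟨hs.2.le, le_refl h⟩
        calc ‖f (xb + h • v) - f (xb + s • v)‖ ≤ ε/2 * (h - s) := hmvt
          _ ≤ ε/2 * h := by nlinarith [hs.1, ht₀0, hε]
      have hle := le_of_tendsto hglim hbd
      rw [hf0 _ ht₀not, sub_zero] at hle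
      exact hle
    · rw [hf0 _ hmem, norm_zero]
      exact mul_nonneg (by linarith) hh.1.le
  filter_upwards [Ioo_mem_nhdsGT_of_mem ⟨le_refl (0:ℝ), hδ⟩] with h hh
  have heq : ‖f (xb + h • v) / h‖ = ‖f (xb + h • v)‖ / h := by
    rw [norm_div, Real.norm_of_nonneg hh.1.le]
  rw [heq]
  rw [div_lt_iff₀ hh.1]
  calc ‖f (xb + h • v)‖ ≤ ε/2 * h := key h hh
    _ < ε * h := by nlinarith [hh.1, hε]
end

section
/- Let γ ∈ (1,2] and ρ₁, ρ₂ ≥ 0 be real numbers, and w₁, w₂ ∈ ℝ³. Define the relative entropy η* := (1/(γ-1))[ρ₂^γ - ρ₁^γ - γρ₁^{γ-1}(ρ₂ - ρ₁)] + (1/2)ρ₂|w₂ - w₁|². Then η* ≥ 0, and moreover there is a constant C = C(γ) > 0 such that η* ≥ C (ρ₁ + ρ₂)^{γ-2} (ρ₂ - ρ₁)² + (1/2)ρ₂|w₂ - w₁|² whenever ρ₁ + ρ₂ > 0. -/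
open Set

private lemma tangent_le {p x y : ℝ} (hp0 : 0 < p) (hp1 : p ≤ 1)
    (hy : 0 ≤ y) (hxy : y ≤ x) :
    p * x ^ (p - 1) * (x - y) ≤ x ^ p - y ^ p := by
  rcases eq_or_lt_of_le (hy.trans hxy) with hx | hx
  · have hx0 : x = 0 := hx.symm
    have hy0 : y = 0 := le_antisymm (hxy.trans_eq hx0) hy
    simp [hx0, hy0]
  · have hs : (-1 : ℝ) ≤ y / x - 1 := by
      have : 0 ≤ y / x := div_nonneg hy hx.le
      linarith
    have hb := rpow_one_add_le_one_add_mul_self hs hp0.le hp1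
    have h1s : 1 + (y / x - 1) = y / x := by ring
    rw [h1s] at hb
    have hdiv : (y / x) ^ p = y ^ p / x ^ p := Real.div_rpow hy hx.le p
    rw [hdiv] at hb
    have hxp : (0:ℝ) < x ^ p := Real.rpow_pos_of_pos hx p
    have h2 : y ^ p ≤ x ^ p * (1 + p * (y / x - 1)) := by
      rw [div_le_iff₀ hxp] at hb
      linarith [hb]
    have hxm : x ^ (p - 1) = x ^ p / x := Real.rpow_sub_one hx.ne' p
    rw [hxm]
    have : x ^ p * (1 + p * (y / x - 1)) = x ^ p - p * (x ^ p / x) * (x - y) := by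
      field_simp
      ring
    rw [this] at h2
    linarith

private lemma gap_lower {γ a b : ℝ} (hγ1 : 1 < γ) (hγ2 : γ ≤ 2)
    (ha : 0 ≤ a) (hb : 0 ≤ b) (hab : 0 < a + b) :
    γ * (γ - 1) / 2 * (a + b) ^ (γ - 2) * (b - a) ^ 2 ≤
      b ^ γ - a ^ γ - γ * a ^ (γ - 1) * (b - a) := by
  have hγ0 : (0:ℝ) < γ := by linarith
  have hp0 : (0:ℝ) < γ - 1 := by linarith
  have hp1 : γ - 1 ≤ 1 := by linarith
  have hcont : Continuous fun t : ℝ => t ^ (γ - 1) :=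
    Real.continuous_rpow_const hp0.le
  have hcf : Continuous fun t : ℝ => γ * t ^ (γ - 1) :=
    continuous_const.mul hcont
  have hC : (0:ℝ) ≤ (a + b) ^ (γ - 2) := Real.rpow_nonneg hab.le _
  rcases le_or_gt a b with hab' | hab'
  · -- a ≤ b
    have hf : IntervalIntegrable (fun t => γ * t ^ (γ - 1) - γ * a ^ (γ - 1))
        MeasureTheory.volume a b :=
      (hcf.sub continuous_const).intervalIntegrable a b
    have hg : IntervalIntegrable
        (fun t => γ * (γ - 1) * (a + b) ^ (γ - 2) * (t - a))
        MeasureTheory.volume a b :=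
      (continuous_const.mul (continuous_id.sub continuous_const)).intervalIntegrable a b
    have hpt : ∀ t ∈ Set.Icc a b,
        γ * (γ - 1) * (a + b) ^ (γ - 2) * (t - a) ≤
          γ * t ^ (γ - 1) - γ * a ^ (γ - 1) := by
      intro t ht
      rcases eq_or_lt_of_le ht.1 with h | h
      · simp [← h]
      · have ht0 : 0 < t := lt_of_le_of_lt ha h
        have h1 : (γ - 1) * t ^ (γ - 1 - 1) * (t - a) ≤
            t ^ (γ - 1) - a ^ (γ - 1) := tangent_le hp0 hp1 ha h.le
        have h2 : (a + b) ^ (γ - 2) ≤ t ^ (γ - 2) :=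
          Real.rpow_le_rpow_of_nonpos ht0 (by linarith [ht.2]) (by linarith)
        have h3 : γ * ((γ - 1) * (a + b) ^ (γ - 2) * (t - a)) ≤
            γ * ((γ - 1) * t ^ (γ - 2) * (t - a)) := by
          apply mul_le_mul_of_nonneg_left _ hγ0.le
          apply mul_le_mul_of_nonneg_right _ (by linarith)
          exact mul_le_mul_of_nonneg_left h2 hp0.le
        have he : γ - 1 - 1 = γ - 2 := by ring
        rw [he] at h1
        nlinarith [h1, h3]
    have hint := intervalIntegral.integral_mono_on hab' hg hf hpt
    have hI1 : (∫ t in a..b, (γ * t ^ (γ - 1) - γ * a ^ (γ - 1))) =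
        b ^ γ - a ^ γ - γ * a ^ (γ - 1) * (b - a) := by
      rw [intervalIntegral.integral_sub (hcf.intervalIntegrable a b)
        intervalIntegrable_const]
      rw [intervalIntegral.integral_const_mul,
        integral_rpow (Or.inl (by linarith)),
        intervalIntegral.integral_const]
      have he : γ - 1 + 1 = γ := by ring
      rw [he]
      field_simp
      ring
    have hI2 : (∫ t in a..b, γ * (γ - 1) * (a + b) ^ (γ - 2) * (t - a)) =
        γ * (γ - 1) / 2 * (a + b) ^ (γ - 2) * (b - a) ^ 2 := by
      rw [intervalIntegral.integral_const_mul]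
      rw [intervalIntegral.integral_sub (continuous_id'.intervalIntegrable a b)
        intervalIntegrable_const, integral_id,
        intervalIntegral.integral_const]
      simp only [smul_eq_mul]
      ring
    rw [hI1, hI2] at hint
    exact hint
  · -- b < a
    have ha0 : 0 < a := lt_of_le_of_lt hb hab'
    have hf : IntervalIntegrable (fun t => γ * a ^ (γ - 1) - γ * t ^ (γ - 1))
        MeasureTheory.volume b a :=
      (continuous_const.sub hcf).intervalIntegrable b a
    have hg : IntervalIntegrable
        (fun t => γ * (γ - 1) * (a + b) ^ (γ - 2) * (a - t))
        MeasureTheory.volume b a :=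
      (continuous_const.mul (continuous_const.sub continuous_id)).intervalIntegrable b a
    have hpt : ∀ t ∈ Set.Icc b a,
        γ * (γ - 1) * (a + b) ^ (γ - 2) * (a - t) ≤
          γ * a ^ (γ - 1) - γ * t ^ (γ - 1) := by
      intro t ht
      have ht0 : 0 ≤ t := hb.trans ht.1
      have h1 : (γ - 1) * a ^ (γ - 1 - 1) * (a - t) ≤
          a ^ (γ - 1) - t ^ (γ - 1) := tangent_le hp0 hp1 ht0 ht.2
      have h2 : (a + b) ^ (γ - 2) ≤ a ^ (γ - 2) :=
        Real.rpow_le_rpow_of_nonpos ha0 (by linarith) (by linarith)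
      have h3 : γ * ((γ - 1) * (a + b) ^ (γ - 2) * (a - t)) ≤
          γ * ((γ - 1) * a ^ (γ - 2) * (a - t)) := by
        apply mul_le_mul_of_nonneg_left _ hγ0.le
        apply mul_le_mul_of_nonneg_right _ (by linarith [ht.2])
        exact mul_le_mul_of_nonneg_left h2 hp0.le
      have he : γ - 1 - 1 = γ - 2 := by ring
      rw [he] at h1
      nlinarith [h1, h3]
    have hint := intervalIntegral.integral_mono_on hab'.le hg hf hpt
    have hI1 : (∫ t in b..a, (γ * a ^ (γ - 1) - γ * t ^ (γ - 1))) =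
        b ^ γ - a ^ γ - γ * a ^ (γ - 1) * (b - a) := by
      rw [intervalIntegral.integral_sub intervalIntegrable_const
        (hcf.intervalIntegrable b a)]
      rw [intervalIntegral.integral_const, intervalIntegral.integral_const_mul,
        integral_rpow (Or.inl (by linarith))]
      have he : γ - 1 + 1 = γ := by ring
      rw [he]
      field_simp
      ring
    have hI2 : (∫ t in b..a, γ * (γ - 1) * (a + b) ^ (γ - 2) * (a - t)) =
        γ * (γ - 1) / 2 * (a + b) ^ (γ - 2) * (b - a) ^ 2 := by
      rw [intervalIntegral.integral_const_mul]
      rw [intervalIntegral.integral_sub intervalIntegrable_const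
        (continuous_id'.intervalIntegrable b a), integral_id,
        intervalIntegral.integral_const]
      simp only [smul_eq_mul]
      ring
    rw [hI1, hI2] at hint
    exact hint

/-- Nonnegativity and quadratic lower bound for the relative entropy
`η* = (1/(γ-1))[ρ₂^γ - ρ₁^γ - γρ₁^{γ-1}(ρ₂-ρ₁)] + (1/2)ρ₂|w₂-w₁|²` for `γ ∈ (1,2]`. -/
theorem relative_entropy_nonneg_and_lower_bound
    (γ : ℝ) (hγ : γ ∈ Set.Ioc (1:ℝ) 2) :
    ∃ C > (0:ℝ), ∀ (ρ₁ ρ₂ : ℝ) (w₁ w₂ : EuclideanSpace ℝ (Fin 3)),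
      0 ≤ ρ₁ → 0 ≤ ρ₂ →
      (0 ≤ (1/(γ-1)) * (ρ₂ ^ γ - ρ₁ ^ γ - γ * ρ₁ ^ (γ-1) * (ρ₂ - ρ₁))
            + (1/2) * ρ₂ * ‖w₂ - w₁‖^2) ∧
      (0 < ρ₁ + ρ₂ →
        C * (ρ₁ + ρ₂) ^ (γ - 2) * (ρ₂ - ρ₁)^2 + (1/2) * ρ₂ * ‖w₂ - w₁‖^2 ≤
          (1/(γ-1)) * (ρ₂ ^ γ - ρ₁ ^ γ - γ * ρ₁ ^ (γ-1) * (ρ₂ - ρ₁))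
            + (1/2) * ρ₂ * ‖w₂ - w₁‖^2) := by
  obtain ⟨hγ1, hγ2⟩ := hγ
  have hp0 : (0:ℝ) < γ - 1 := by linarith
  refine ⟨γ / 2, by linarith, ?_⟩
  intro ρ₁ ρ₂ w₁ w₂ h1 h2
  have hkin : (0:ℝ) ≤ (1/2) * ρ₂ * ‖w₂ - w₁‖^2 := by positivity
  have key : 0 < ρ₁ + ρ₂ →
      γ / 2 * (ρ₁ + ρ₂) ^ (γ - 2) * (ρ₂ - ρ₁) ^ 2 ≤
        (1/(γ-1)) * (ρ₂ ^ γ - ρ₁ ^ γ - γ * ρ₁ ^ (γ-1) * (ρ₂ - ρ₁)) := by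
    intro h
    have hg := gap_lower hγ1 hγ2 h1 h2 h
    have hgap : 0 ≤ (ρ₂ ^ γ - ρ₁ ^ γ - γ * ρ₁ ^ (γ-1) * (ρ₂ - ρ₁))
        - γ * (γ - 1) / 2 * (ρ₁ + ρ₂) ^ (γ - 2) * (ρ₂ - ρ₁) ^ 2 := by linarith
    rw [← sub_nonneg]
    have heq : (1/(γ-1)) * (ρ₂ ^ γ - ρ₁ ^ γ - γ * ρ₁ ^ (γ-1) * (ρ₂ - ρ₁))
        - γ / 2 * (ρ₁ + ρ₂) ^ (γ - 2) * (ρ₂ - ρ₁) ^ 2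
        = (1/(γ-1)) * ((ρ₂ ^ γ - ρ₁ ^ γ - γ * ρ₁ ^ (γ-1) * (ρ₂ - ρ₁))
            - γ * (γ - 1) / 2 * (ρ₁ + ρ₂) ^ (γ - 2) * (ρ₂ - ρ₁) ^ 2) := by
      field_simp
    rw [heq]
    exact mul_nonneg (by positivity) hgap
  constructor
  · rcases eq_or_lt_of_le (add_nonneg h1 h2) with h | h
    · have hρ1 : ρ₁ = 0 := by linarith
      have hρ2 : ρ₂ = 0 := by linarith
      simp [hρ1, hρ2, Real.zero_rpow (by linarith : γ ≠ 0),
        Real.zero_rpow (by linarith : γ - 1 ≠ 0)]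
    · have hk := key h
      have hq : (0:ℝ) ≤ γ / 2 * (ρ₁ + ρ₂) ^ (γ - 2) * (ρ₂ - ρ₁) ^ 2 := by
        have : (0:ℝ) ≤ (ρ₁ + ρ₂) ^ (γ - 2) := Real.rpow_nonneg h.le _
        positivity
      linarith
  · intro h
    have := key h
    linarith
end
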